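/- arXiv:math/0608770 — 6 statements merged into one kernel-verified Lean document; each statement's English description precedes it below -/
import Mathlib

section
/- Let V be a finite-dimensional real vector space with a nondegenerate symmetric bilinear form g, and let p : V → V be a linear endomorphism of rank 1 with trace 1 that is g-symmetric (g(p X, Y) = g(X, p Y) for all X, Y). Then there exists P ∈ V with g(P,P) ≠ 0 such that p(X) = (g(P,X)/g(P,P))·P for all X. -/
/-- The observer idempotent associated to a vector `P`: `X ↦ (g P X / g P P) • P`. -/
noncomputable def obs {V : Type*} [AddCommGroup V] [Module ℝ V]
    (g : LinearMap.BilinForm ℝ V) (P : V) : V →ₗ[ℝ] V :=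
  (g P P)⁻¹ • ((LinearMap.toSpanSingleton ℝ V P).comp (g P))

/-- `g` has Lorentzian signature (−,+,+,+) on a 4-dimensional real space. -/
def IsMinkowski {V : Type*} [AddCommGroup V] [Module ℝ V]
    (g : LinearMap.BilinForm ℝ V) : Prop :=
  ∃ b : Module.Basis (Fin 4) ℝ V, ∀ i j, g (b i) (b j) =
    if i = j then (if i = (0 : Fin 4) then (-1 : ℝ) else 1) else 0

/-- The binary relative velocity operator `ϖ(x,y) = (y∘x)/tr(y∘x) − x`. -/
noncomputable def vel {V : Type*} [AddCommGroup V] [Module ℝ V]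
    (x y : V →ₗ[ℝ] V) : V →ₗ[ℝ] V :=
  (LinearMap.trace ℝ V (y ∘ₗ x))⁻¹ • (y ∘ₗ x) - x

theorem stmt_2 (V : Type*) [AddCommGroup V] [Module ℝ V] [FiniteDimensional ℝ V]
    (g : LinearMap.BilinForm ℝ V) (hsymm : ∀ X Y : V, g X Y = g Y X)
    (hnd : g.Nondegenerate)
    (p : V →ₗ[ℝ] V)
    (hrank : Module.finrank ℝ (LinearMap.range p) = 1)
    (htr : LinearMap.trace ℝ V p = 1)
    (hgp : ∀ X Y : V, g (p X) Y = g X (p Y)) :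
    ∃ P : V, g P P ≠ 0 ∧ ∀ X : V, p X = (g P X / g P P) • P := by
  obtain ⟨v, hv0, hv⟩ := finrank_eq_one_iff'.mp hrank
  set v₀ : V := (v : V) with hv₀def
  have hv₀0 : v₀ ≠ 0 := fun h => hv0 (Subtype.ext h)
  have hc : ∀ X : V, ∃ c : ℝ, p X = c • v₀ := by
    intro X
    obtain ⟨c, hc⟩ := hv ⟨p X, LinearMap.mem_range_self p X⟩
    exact ⟨c, by simpa using (congrArg Subtype.val hc).symm⟩
  choose f hf using hc
  have hinj : Function.Injective (fun c : ℝ => c • v₀) := smul_left_injective ℝ hv₀0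
  let F : V →ₗ[ℝ] ℝ :=
    { toFun := f
      map_add' := fun X Y => hinj (by simp only [← hf, map_add, add_smul])
      map_smul' := fun c X => hinj (by simp only [← hf, map_smul, smul_eq_mul, mul_smul,
        RingHom.id_apply]) }
  -- trace computation : f v₀ = 1
  have hfv : f v₀ = 1 := by
    have hp : p = dualTensorHom ℝ V V (F ⊗ₜ[ℝ] v₀) := by
      ext X; simp only [dualTensorHom_apply]; exact hf X
    rw [hp, LinearMap.trace_eq_contract_apply, contractLeft_apply] at htr
    exact htr
  have key : ∀ X Y : V, f X * g v₀ Y = f Y * g X v₀ := by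
    intro X Y
    have h := hgp X Y
    rw [hf X, hf Y] at h
    simpa [smul_eq_mul] using h
  have hgX : ∀ X : V, g X v₀ = f X * g v₀ v₀ := by
    intro X
    have h := key X v₀
    rw [hfv, one_mul] at h
    exact h.symm
  have hne : g v₀ v₀ ≠ 0 := by
    intro h0
    apply hv₀0
    apply hnd.1
    intro Y
    rw [hsymm v₀ Y, hgX Y, h0, mul_zero]
  refine ⟨v₀, hne, fun X => ?_⟩
  rw [hf X]
  congr 1
  rw [hsymm v₀ X, hgX X]
  field_simp
end

section
/- Let P, Q be unit timelike vectors in Minkowski space with γ = −g(P,Q) > 0, let p, q be the associated idempotents p(X) = (g(P,X)/g(P,P))P, q(X) = (g(Q,X)/g(Q,Q))Q, and let ϖ(p,q) = (q∘p)/tr(q∘p) − p be the velocity operator. Then for every vector R ∈ V, ϖ(p,q)(R) = (−g(P,R))·w(P,Q), where w(P,Q) = Q/γ − P is the binary relative velocity vector. -/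
theorem stmt_11 (V : Type*) [AddCommGroup V] [Module ℝ V] [FiniteDimensional ℝ V]
    (g : LinearMap.BilinForm ℝ V) (hsymm : ∀ X Y : V, g X Y = g Y X)
    (hnd : g.Nondegenerate)
    (hmink : IsMinkowski g)
    (P Q : V) (hP : g P P = -1) (hQ : g Q Q = -1) (horient : g P Q < 0) :
    ∀ R : V, vel (obs g P) (obs g Q) R =
      (-(g P R)) • ((-(g P Q))⁻¹ • Q - P) := by
  intro R
  have hne : g P Q ≠ 0 := ne_of_lt horient
  have hcomp : (obs g Q ∘ₗ obs g P) =
      (g Q P) • dualTensorHom ℝ V V (g P ⊗ₜ Q) := by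
    ext X
    simp [obs, dualTensorHom_apply, hP, hQ, smul_smul]
    module
  have htr : LinearMap.trace ℝ V (obs g Q ∘ₗ obs g P) = g P Q * g P Q := by
    rw [hcomp, map_smul, LinearMap.trace_eq_contract_apply, contractLeft_apply,
      hsymm Q P]
    simp [mul_comm]
  have key : vel (obs g P) (obs g Q) R =
      (g P Q * g P Q)⁻¹ • ((g Q P) • ((g P R) • Q)) - (g P P)⁻¹ • ((g P R) • P) := by
    rw [vel, htr]
    simp [hcomp, obs, dualTensorHom_apply]
    match_scalars; rw [hP, hQ]; field_simp
  rw [key, hP, hsymm Q P]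
  match_scalars <;> (field_simp; try ring)
end

section
/- Let P, Q, R be unit timelike vectors in Minkowski space, all in the same time orientation, with Lorentz factors γ_PQ = −g(P,Q), γ_QR = −g(Q,R), γ_PR = −g(P,R). Then g(w(Q,P), w(Q,R)) = 1 − γ_PR/(γ_PQ·γ_QR), where w(Q,X) = X/(−g(Q,X)) − Q denotes the binary relative velocity of X relative to Q. -/
theorem stmt_12 (V : Type*) [AddCommGroup V] [Module ℝ V] [FiniteDimensional ℝ V]
    (g : LinearMap.BilinForm ℝ V) (hsymm : ∀ X Y : V, g X Y = g Y X)
    (hnd : g.Nondegenerate)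
    (hmink : IsMinkowski g)
    (P Q R : V) (hP : g P P = -1) (hQ : g Q Q = -1) (hR : g R R = -1)
    (hPQ : g P Q < 0) (hQR : g Q R < 0) (hPR : g P R < 0) :
    g ((-(g Q P))⁻¹ • P - Q) ((-(g Q R))⁻¹ • R - Q) =
      1 - (-(g P R)) / ((-(g P Q)) * (-(g Q R))) := by
  have h1 : g Q P = g P Q := hsymm Q P
  simp only [map_sub, map_smul, LinearMap.sub_apply, LinearMap.smul_apply, smul_eq_mul, h1]
  rw [hQ]
  field_simp [hPQ.ne, hQR.ne]
  ring
end

section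
/- Let P, Q, R be g-anisotropic vectors in a finite-dimensional real vector space with nondegenerate symmetric bilinear form g, with associated rank-one idempotents p, q, r, and assume tr(p∘q), tr(q∘r), tr(p∘r), tr(p∘q∘r) are all nonzero. Define ϖ(x,y) = (y∘x)/tr(y∘x) − x for observer idempotents x, y. Then ϖ(p,r) = (tr(pqr)/tr(pr))·( ϖ(p,q) + (1/tr(pq))·ϖ(q,r)∘p ) + (tr(pqr)/tr(pr) − 1)·p, where tr(pqr) = tr(p∘q∘r). -/
noncomputable def K {V : Type*} [AddCommGroup V] [Module ℝ V]
    (g : LinearMap.BilinForm ℝ V) (X Y : V) : V →ₗ[ℝ] V :=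
  (LinearMap.toSpanSingleton ℝ V X).comp (g Y)

lemma K_apply {V : Type*} [AddCommGroup V] [Module ℝ V]
    (g : LinearMap.BilinForm ℝ V) (X Y v : V) : K g X Y v = g Y v • X := rfl

lemma K_comp {V : Type*} [AddCommGroup V] [Module ℝ V]
    (g : LinearMap.BilinForm ℝ V) (X Y Z W : V) :
    K g X Y ∘ₗ K g Z W = g Y Z • K g X W := by
  ext v
  simp [K_apply, smul_smul, mul_comm]

lemma trace_K {V : Type*} [AddCommGroup V] [Module ℝ V] [FiniteDimensional ℝ V]
    (g : LinearMap.BilinForm ℝ V) (X Y : V) :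
    LinearMap.trace ℝ V (K g X Y) = g Y X := by
  rw [K, LinearMap.trace_comp_comm']
  have : (g Y ∘ₗ LinearMap.toSpanSingleton ℝ V X) = (g Y X) • LinearMap.id := by
    ext; simp [LinearMap.toSpanSingleton, mul_comm]
  rw [this]
  simp

lemma obs_eq {V : Type*} [AddCommGroup V] [Module ℝ V]
    (g : LinearMap.BilinForm ℝ V) (P : V) : obs g P = (g P P)⁻¹ • K g P P := rfl
lemma obs_comp {V : Type*} [AddCommGroup V] [Module ℝ V]
    (g : LinearMap.BilinForm ℝ V) (X Y : V) :
    obs g X ∘ₗ obs g Y = ((g X X)⁻¹ * ((g Y Y)⁻¹ * g X Y)) • K g X Y := by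
  rw [obs_eq, obs_eq, LinearMap.smul_comp, LinearMap.comp_smul, K_comp, smul_smul, smul_smul, mul_assoc]

lemma obs_comp_K {V : Type*} [AddCommGroup V] [Module ℝ V]
    (g : LinearMap.BilinForm ℝ V) (X Y Z : V) :
    obs g X ∘ₗ K g Y Z = ((g X X)⁻¹ * g X Y) • K g X Z := by
  rw [obs_eq, LinearMap.smul_comp, K_comp, smul_smul]

lemma K_comp_obs {V : Type*} [AddCommGroup V] [Module ℝ V]
    (g : LinearMap.BilinForm ℝ V) (X Y Z : V) :
    K g X Y ∘ₗ obs g Z = ((g Z Z)⁻¹ * g Y Z) • K g X Z := by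
  rw [obs_eq, LinearMap.comp_smul, K_comp, smul_smul, mul_comm]

set_option maxHeartbeats 1000000 in
theorem stmt_13 (V : Type*) [AddCommGroup V] [Module ℝ V] [FiniteDimensional ℝ V]
    (g : LinearMap.BilinForm ℝ V) (hsymm : ∀ X Y : V, g X Y = g Y X)
    (hnd : g.Nondegenerate)
    (P Q R : V) (hP : g P P ≠ 0) (hQ : g Q Q ≠ 0) (hR : g R R ≠ 0)
    (hpq : LinearMap.trace ℝ V (obs g P ∘ₗ obs g Q) ≠ 0)
    (hqr : LinearMap.trace ℝ V (obs g Q ∘ₗ obs g R) ≠ 0)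
    (hpr : LinearMap.trace ℝ V (obs g P ∘ₗ obs g R) ≠ 0)
    (hpqr : LinearMap.trace ℝ V (obs g P ∘ₗ obs g Q ∘ₗ obs g R) ≠ 0) :
    vel (obs g P) (obs g R) =
      (LinearMap.trace ℝ V (obs g P ∘ₗ obs g Q ∘ₗ obs g R) /
        LinearMap.trace ℝ V (obs g P ∘ₗ obs g R)) •
        (vel (obs g P) (obs g Q) +
          (LinearMap.trace ℝ V (obs g P ∘ₗ obs g Q))⁻¹ •
            (vel (obs g Q) (obs g R) ∘ₗ obs g P)) +
      (LinearMap.trace ℝ V (obs g P ∘ₗ obs g Q ∘ₗ obs g R) /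
        LinearMap.trace ℝ V (obs g P ∘ₗ obs g R) - 1) • obs g P := by
  have sym : ∀ X Y : V, g Y X = g X Y := fun X Y => hsymm Y X
  have h3 : LinearMap.trace ℝ V (obs g P ∘ₗ obs g Q ∘ₗ obs g R) =
      (g P P)⁻¹ * (g Q Q)⁻¹ * (g R R)⁻¹ * (g P Q * g Q R * g P R) := by
    simp only [obs_comp, LinearMap.comp_smul, obs_comp_K, map_smul, smul_eq_mul, trace_K,
      sym R P]
    ring
  have h1 : LinearMap.trace ℝ V (obs g P ∘ₗ obs g Q) =
      (g P P)⁻¹ * (g Q Q)⁻¹ * (g P Q * g P Q) := by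
    simp only [obs_comp, map_smul, smul_eq_mul, trace_K, sym Q P]; ring
  have h1' : LinearMap.trace ℝ V (obs g Q ∘ₗ obs g P) =
      (g P P)⁻¹ * (g Q Q)⁻¹ * (g P Q * g P Q) := by
    simp only [obs_comp, map_smul, smul_eq_mul, trace_K, sym Q P]; ring
  have h2 : LinearMap.trace ℝ V (obs g P ∘ₗ obs g R) =
      (g P P)⁻¹ * (g R R)⁻¹ * (g P R * g P R) := by
    simp only [obs_comp, map_smul, smul_eq_mul, trace_K, sym R P]; ring
  have h2' : LinearMap.trace ℝ V (obs g R ∘ₗ obs g P) =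
      (g P P)⁻¹ * (g R R)⁻¹ * (g P R * g P R) := by
    simp only [obs_comp, map_smul, smul_eq_mul, trace_K, sym R P]; ring
  have h4 : LinearMap.trace ℝ V (obs g Q ∘ₗ obs g R) =
      (g Q Q)⁻¹ * (g R R)⁻¹ * (g Q R * g Q R) := by
    simp only [obs_comp, map_smul, smul_eq_mul, trace_K, sym R Q]; ring
  have h4' : LinearMap.trace ℝ V (obs g R ∘ₗ obs g Q) =
      (g Q Q)⁻¹ * (g R R)⁻¹ * (g Q R * g Q R) := by
    simp only [obs_comp, map_smul, smul_eq_mul, trace_K, sym R Q]; ring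
  have hprod : g P Q * g Q R * g P R ≠ 0 := by
    rw [h3] at hpqr
    intro h; apply hpqr; rw [h]; ring
  have ha : g P Q ≠ 0 := fun h => hprod (by rw [h]; ring)
  have hb : g Q R ≠ 0 := fun h => hprod (by rw [h]; ring)
  have hc : g P R ≠ 0 := fun h => hprod (by rw [h]; ring)
  simp only [vel]
  rw [h1, h2', h3, h2, h4']
  simp only [LinearMap.sub_comp, LinearMap.smul_comp]
  rw [h1', obs_comp g R P]
  simp only [obs_comp, LinearMap.smul_comp, K_comp_obs, smul_smul]
  simp only [obs_eq g P]
  have ha' : g Q P ≠ 0 := by rw [sym Q P] at ha; exact ha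
  have hb' : g R Q ≠ 0 := by rw [sym R Q] at hb; exact hb
  have hc' : g R P ≠ 0 := by rw [sym R P] at hc; exact hc
  match_scalars <;> (try simp only [hsymm Q P, hsymm R Q, hsymm R P]) <;> field_simp <;> try ring
end

section
/- Let P, Q be g-anisotropic vectors with g(P,Q) ≠ 0 in a finite-dimensional real vector space with nondegenerate symmetric bilinear form g, p and q the associated rank-one idempotents, and ϖ(x,y) = (y∘x)/tr(y∘x) − x. Then ϖ(p,q) = −(ϖ(q,p)∘p)/tr(p∘q) − (1 − 1/tr(p∘q))·p. -/
lemma trace_rank_one {V : Type*} [AddCommGroup V] [Module ℝ V] [FiniteDimensional ℝ V]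
    (f : V →ₗ[ℝ] ℝ) (v : V) :
    LinearMap.trace ℝ V ((LinearMap.toSpanSingleton ℝ V v) ∘ₗ f) = f v := by
  have h : (LinearMap.toSpanSingleton ℝ V v) ∘ₗ f = dualTensorHom ℝ V V (f ⊗ₜ v) := by
    ext x; simp [LinearMap.toSpanSingleton_apply]
  rw [h, LinearMap.trace_eq_contract_apply]
  simp

theorem stmt_14 (V : Type*) [AddCommGroup V] [Module ℝ V] [FiniteDimensional ℝ V]
    (g : LinearMap.BilinForm ℝ V) (hsymm : ∀ X Y : V, g X Y = g Y X)
    (hnd : g.Nondegenerate)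
    (P Q : V) (hP : g P P ≠ 0) (hQ : g Q Q ≠ 0) (hPQ : g P Q ≠ 0) :
    vel (obs g P) (obs g Q) =
      -((LinearMap.trace ℝ V (obs g P ∘ₗ obs g Q))⁻¹ •
          (vel (obs g Q) (obs g P) ∘ₗ obs g P)) -
        (1 - (LinearMap.trace ℝ V (obs g P ∘ₗ obs g Q))⁻¹) • obs g P := by
  set s : ℝ := (g P Q)^2 / (g P P * g Q Q) with hs_def
  have hs : s ≠ 0 := by
    rw [hs_def]
    positivity
  have hcomp : obs g P ∘ₗ obs g Q
      = ((g P P)⁻¹ * (g Q Q)⁻¹ * g P Q) • ((LinearMap.toSpanSingleton ℝ V P) ∘ₗ (g Q)) := by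
    ext X
    simp only [obs, LinearMap.comp_apply, LinearMap.smul_apply,
      LinearMap.toSpanSingleton_apply, map_smul, smul_smul, smul_eq_mul]
    ring_nf
  have htr : LinearMap.trace ℝ V (obs g P ∘ₗ obs g Q) = s := by
    rw [hcomp, map_smul, trace_rank_one, hsymm Q P, hs_def]
    rw [smul_eq_mul]
    field_simp
  have htr' : LinearMap.trace ℝ V (obs g Q ∘ₗ obs g P) = s := by
    rw [show obs g Q ∘ₗ obs g P = obs g Q * obs g P from rfl, LinearMap.trace_mul_comm]
    exact htr
  have hpqp : (obs g P ∘ₗ obs g Q) ∘ₗ obs g P = s • obs g P := by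
    ext X
    simp only [obs, LinearMap.comp_apply, LinearMap.smul_apply,
      LinearMap.toSpanSingleton_apply, map_smul, smul_smul, smul_eq_mul]
    rw [hsymm Q P]
    match_scalars
    rw [hs_def]; field_simp
  rw [vel, vel, htr, htr', LinearMap.sub_comp, LinearMap.smul_comp,
    LinearMap.comp_assoc, ← LinearMap.comp_assoc, hpqp, smul_smul,
    inv_mul_cancel₀ hs, one_smul]
  module
end

section
/- Let P, Q, R be unit timelike vectors in Minkowski space with the same time orientation, and define the Lorentz factor product identity: (−g(P,Q))·(−g(Q,R))·(1 − g(w(Q,P), w(Q,R))) = −g(P,R), where w(Q,X) = X/(−g(Q,X)) − Q. -/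
theorem stmt_18 (V : Type*) [AddCommGroup V] [Module ℝ V] [FiniteDimensional ℝ V]
    (g : LinearMap.BilinForm ℝ V) (hsymm : ∀ X Y : V, g X Y = g Y X)
    (hnd : g.Nondegenerate)
    (hmink : IsMinkowski g)
    (P Q R : V) (hP : g P P = -1) (hQ : g Q Q = -1) (hR : g R R = -1)
    (hPQ : g P Q < 0) (hQR : g Q R < 0) (hPR : g P R < 0) :
    (-(g P Q)) * (-(g Q R)) *
      (1 - g ((-(g Q P))⁻¹ • P - Q) ((-(g Q R))⁻¹ • R - Q)) = -(g P R) := by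
  have hQP : g Q P = g P Q := hsymm Q P
  have ha : g P Q ≠ 0 := ne_of_lt hPQ
  have hb : g Q R ≠ 0 := ne_of_lt hQR
  simp only [map_sub, map_smul, LinearMap.sub_apply, LinearMap.smul_apply, smul_eq_mul,
    hQP, hQ, hsymm R Q]
  set a := g P Q; set b := g Q R; set r := g P R
  have ha' : (-a) ≠ 0 := neg_ne_zero.mpr ha
  have hb' : (-b) ≠ 0 := neg_ne_zero.mpr hb
  field_simp
  ring
end
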